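/- Let T : X → X be a proper map on a locally compact separable metric space, let d̃ be a metric on the one-point compactification X̃ inducing its topology, and let d be its restriction to X. Then h^d(T) = h^{d̃}(T̃), where T̃ is the extension of T to X̃ fixing ∞, and h^d denotes the spanning-set entropy of the whole space. -/

import Mathlib

open Set Filter Topology

/-- A map is proper if it is continuous and preimages of compact sets are compact. -/
def IsProper {X Y : Type*} [TopologicalSpace X] [TopologicalSpace Y] (f : X → Y) : Prop :=
  Continuous f ∧ ∀ K : Set Y, IsCompact K → IsCompact (f ⁻¹' K)

/-- An admissible covering: open, finite, covers, and each element has compact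
closure or compact complement. -/
def IsAdmissibleCover {X : Type*} [TopologicalSpace X] (α : Set (Set X)) : Prop :=
  α.Finite ∧ (∀ A ∈ α, IsOpen A) ∧ ⋃₀ α = univ ∧
    ∀ A ∈ α, IsCompact (closure A) ∨ IsCompact Aᶜ

/-- `coverIter T α n` is the collection of sets `A₀ ∩ T⁻¹ A₁ ∩ ⋯ ∩ T⁻⁽ⁿ⁻¹⁾ A_{n-1}`
with all `Aᵢ ∈ α`; the paper's `αⁿ` is `coverIter T α (n+1)`. -/
def coverIter {X : Type*} (T : X → X) (α : Set (Set X)) (n : ℕ) : Set (Set X) :=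
  {B | ∃ A : Fin n → Set X, (∀ i, A i ∈ α) ∧ B = ⋂ i : Fin n, T^[i.val] ⁻¹' A i}

/-- `coverNum β` is the minimal cardinality of a (finite) subcover of `β`. -/
noncomputable def coverNum {X : Type*} (β : Set (Set X)) : ℕ :=
  sInf {k | ∃ γ ⊆ β, γ.Finite ∧ ⋃₀ γ = univ ∧ γ.ncard = k}

/-- The dynamical (Bowen) distance `dₙ(x,y) = max_{0 ≤ i ≤ n} d(Tⁱx, Tⁱy)`. -/
noncomputable def dynDist {X : Type*} [PseudoMetricSpace X] (T : X → X) (n : ℕ)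
    (x y : X) : ℝ :=
  (Finset.range (n + 1)).sup' (by simp) fun i => dist (T^[i] x) (T^[i] y)

/-- `G` is `(n, ε)`-spanning for `Y`. -/
def IsDynSpanning {X : Type*} [PseudoMetricSpace X] (T : X → X) (n : ℕ) (ε : ℝ)
    (Y G : Set X) : Prop :=
  ∀ y ∈ Y, ∃ x ∈ G, dynDist T n x y < ε

/-- `Gₙ(ε, Y)`: minimal cardinality of an `(n, ε)`-spanning set of `Y`. -/
noncomputable def spanNum {X : Type*} [PseudoMetricSpace X] (T : X → X) (n : ℕ) (ε : ℝ)
    (Y : Set X) : ℕ :=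
  sInf {k | ∃ G : Set X, G.Finite ∧ IsDynSpanning T n ε Y G ∧ G.ncard = k}

/-- `g(ε, Y) = limsup (1/n) log Gₙ(ε, Y)`. -/
noncomputable def spanRate {X : Type*} [PseudoMetricSpace X] (T : X → X) (ε : ℝ)
    (Y : Set X) : EReal :=
  Filter.limsup (fun n : ℕ => ((Real.log (spanNum T n ε Y) / n : ℝ) : EReal)) Filter.atTop

/-- `h_d(T, Y) = lim_{ε ↓ 0} g(ε, Y)` (the limit as a supremum, since `g` is antitone). -/
noncomputable def spanEntropyOn {X : Type*} [PseudoMetricSpace X] (T : X → X)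
    (Y : Set X) : EReal :=
  ⨆ (ε : ℝ) (_ : 0 < ε), spanRate T ε Y

/-- `h^d(T) = h_d(T, X)`, the spanning-set entropy of the whole space. -/
noncomputable def spanEntropy {X : Type*} [PseudoMetricSpace X] (T : X → X) : EReal :=
  spanEntropyOn T Set.univ

/-- The extension of `T : X → X` to the one-point compactification, fixing `∞`. -/
def onePointExt {X : Type*} (T : X → X) : OnePoint X → OnePoint X := Option.map T

/- ## Auxiliary lemmas -/

lemma onePointExt_iterate_coe {X : Type*} (T : X → X) (i : ℕ) (x : X) :
    (onePointExt T)^[i] (x : OnePoint X) = ((T^[i] x : X) : OnePoint X) := by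
  induction i with
  | zero => rfl
  | succ k ih => rw [Function.iterate_succ_apply', ih, Function.iterate_succ_apply']; rfl

lemma onePointExt_iterate_infty {X : Type*} (T : X → X) (i : ℕ) :
    (onePointExt T)^[i] (OnePoint.infty : OnePoint X) = OnePoint.infty := by
  induction i with
  | zero => rfl
  | succ k ih => rw [Function.iterate_succ_apply', ih]; rfl

lemma dynDist_comm' {X : Type*} [PseudoMetricSpace X] (T : X → X) (n : ℕ) (x y : X) :
    dynDist T n x y = dynDist T n y x := by
  unfold dynDist
  exact Finset.sup'_congr _ rfl fun i _ => dist_comm _ _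

lemma dynDist_triangle' {X : Type*} [PseudoMetricSpace X] (T : X → X) (n : ℕ) (x y z : X) :
    dynDist T n x z ≤ dynDist T n x y + dynDist T n y z := by
  unfold dynDist
  apply Finset.sup'_le
  intro i hi
  exact (dist_triangle _ (T^[i] y) _).trans
    (add_le_add (Finset.le_sup' (fun j => dist (T^[j] x) (T^[j] y)) hi)
      (Finset.le_sup' (fun j => dist (T^[j] y) (T^[j] z)) hi))

lemma dynDist_self_infty {X : Type*} [MetricSpace (OnePoint X)] (T : X → X) (n : ℕ) :
    dynDist (onePointExt T) n (OnePoint.infty : OnePoint X) OnePoint.infty = 0 := by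
  unfold dynDist
  rw [Finset.sup'_congr _ rfl (fun i _ => by rw [onePointExt_iterate_infty, dist_self])]
  exact Finset.sup'_const _ _

lemma exists_finite_spanning {Y : Type*} [MetricSpace Y] [CompactSpace Y]
    (T : Y → Y) (n : ℕ) {ε : ℝ} (hε : 0 < ε) :
    ∃ G : Set Y, G.Finite ∧ IsDynSpanning T n ε univ G := by
  rcases isEmpty_or_nonempty Y with hY | hY
  · exact ⟨∅, finite_empty, fun y _ => (IsEmpty.false y).elim⟩
  · set F : Y → (Fin (n + 1) → Y) := fun x i => T^[i.val] x with hF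
    have htb : TotallyBounded (range F) :=
      (isCompact_univ.totallyBounded).subset (subset_univ _)
    obtain ⟨t, hts, htf, hcov⟩ := Metric.finite_approx_of_totallyBounded htb ε hε
    classical
    set c : (Fin (n + 1) → Y) → Y := fun y =>
      if h : ∃ g : Y, F g = y then h.choose else Classical.arbitrary Y with hc
    refine ⟨c '' t, htf.image c, fun x _ => ?_⟩
    obtain ⟨y, hyt, hxy⟩ := by
      have := hcov (mem_range_self (f := F) x)
      simpa using this
    have hy : ∃ g : Y, F g = y := hts hyt
    have hcy : F (c y) = y := by
      rw [hc]; simp only [hy, dif_pos]; exact hy.choose_spec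
    refine ⟨c y, mem_image_of_mem c hyt, ?_⟩
    have hd : dist (F x) (F (c y)) < ε := by rw [hcy]; exact Metric.mem_ball.1 hxy
    rw [dist_pi_lt_iff hε] at hd
    apply Finset.sup'_lt_iff (by simp)|>.2
    intro i hi
    have hi' : i < n + 1 := Finset.mem_range.1 hi
    have := hd ⟨i, hi'⟩
    rw [dist_comm] at this
    exact this

/-- The main argument, assuming `X` nonempty and compactness of the one-point space
with respect to the topology of the given metric. -/
lemma spanEntropy_aux {X : Type*} [MetricSpace X] [Nonempty X] (T : X → X)
    (m : MetricSpace (OnePoint X))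
    (hcs : @CompactSpace (OnePoint X) m.toUniformSpace.toTopologicalSpace)
    (hrestr : ∀ x y : X, @dist _ m.toDist (x : OnePoint X) (y : OnePoint X) = dist x y) :
    spanEntropy T = @spanEntropy (OnePoint X) m.toPseudoMetricSpace (onePointExt T) := by
  classical
  letI := m
  set T' := onePointExt T with hT'
  -- transfer of the dynamical distance
  have hdyn : ∀ (n : ℕ) (x y : X),
      dynDist T' n (x : OnePoint X) (y : OnePoint X) = dynDist T n x y := by
    intro n x y
    unfold dynDist
    refine Finset.sup'_congr _ rfl fun i _ => ?_
    rw [hT', onePointExt_iterate_coe, onePointExt_iterate_coe, hrestr]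
  have hinf : ∀ n : ℕ, dynDist T' n (OnePoint.infty : OnePoint X) OnePoint.infty = 0 :=
    fun n => dynDist_self_infty T n
  -- attainment for the one-point space
  have attain' : ∀ (n : ℕ) (ε : ℝ), 0 < ε → ∃ G : Set (OnePoint X), G.Finite ∧
      IsDynSpanning T' n ε univ G ∧ G.ncard = spanNum T' n ε univ := by
    intro n ε hε
    obtain ⟨G, hGf, hGs⟩ := @exists_finite_spanning (OnePoint X) m hcs T' n ε hε
    have hne : {k | ∃ G : Set (OnePoint X), G.Finite ∧ IsDynSpanning T' n ε univ G ∧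
        G.ncard = k}.Nonempty := ⟨G.ncard, G, hGf, hGs, rfl⟩
    exact Nat.sInf_mem hne
  -- transferring spanning sets down to X (doubling ε)
  have hdown : ∀ (n : ℕ) (ε : ℝ), 0 < ε → ∀ G' : Set (OnePoint X), G'.Finite →
      IsDynSpanning T' n ε univ G' →
      ∃ G : Set X, G.Finite ∧ IsDynSpanning T n (2 * ε) univ G ∧ G.ncard ≤ G'.ncard := by
    intro n ε hε G' hGf hGs
    set c : OnePoint X → X := fun g =>
      if h : ∃ x : X, dynDist T' n (x : OnePoint X) g < ε then h.choose
      else Classical.arbitrary X with hc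
    refine ⟨c '' G', hGf.image c, ?_, Set.ncard_image_le hGf⟩
    intro y _
    obtain ⟨g, hgG, hgd⟩ := hGs (y : OnePoint X) (mem_univ _)
    have hex : ∃ x : X, dynDist T' n (x : OnePoint X) g < ε :=
      ⟨y, by rw [dynDist_comm']; exact hgd⟩
    have hcg : dynDist T' n ((c g : X) : OnePoint X) g < ε := by
      rw [hc]; simp only [hex, dif_pos]; exact hex.choose_spec
    refine ⟨c g, mem_image_of_mem c hgG, ?_⟩
    rw [← hdyn]
    calc dynDist T' n ((c g : X) : OnePoint X) (y : OnePoint X)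
        ≤ dynDist T' n ((c g : X) : OnePoint X) g + dynDist T' n g (y : OnePoint X) :=
          dynDist_triangle' T' n _ _ _
      _ < ε + ε := add_lt_add hcg hgd
      _ = 2 * ε := (two_mul ε).symm
  -- attainment for X
  have attainX : ∀ (n : ℕ) (ε : ℝ), 0 < ε → ∃ G : Set X, G.Finite ∧
      IsDynSpanning T n ε univ G ∧ G.ncard = spanNum T n ε univ := by
    intro n ε hε
    obtain ⟨G', h1, h2⟩ := @exists_finite_spanning (OnePoint X) m hcs T' n (ε / 2) (half_pos hε)
    obtain ⟨G, hGf, hGs, -⟩ := hdown n (ε / 2) (half_pos hε) G' h1 h2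
    rw [show 2 * (ε / 2) = ε by ring] at hGs
    have hne : {k | ∃ G : Set X, G.Finite ∧ IsDynSpanning T n ε univ G ∧
        G.ncard = k}.Nonempty := ⟨G.ncard, G, hGf, hGs, rfl⟩
    exact Nat.sInf_mem hne
  -- positivity
  have posX : ∀ (n : ℕ) (ε : ℝ), 0 < ε → 1 ≤ spanNum T n ε univ := by
    intro n ε hε
    obtain ⟨G, hGf, hGs, hcard⟩ := attainX n ε hε
    obtain ⟨x, hxG, -⟩ := hGs (Classical.arbitrary X) (mem_univ _)
    rw [← hcard]
    exact (Set.ncard_pos hGf).2 ⟨x, hxG⟩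
  have pos' : ∀ (n : ℕ) (ε : ℝ), 0 < ε → 1 ≤ spanNum T' n ε univ := by
    intro n ε hε
    obtain ⟨G, hGf, hGs, hcard⟩ := attain' n ε hε
    obtain ⟨x, hxG, -⟩ := hGs (OnePoint.infty : OnePoint X) (mem_univ _)
    rw [← hcard]
    exact (Set.ncard_pos hGf).2 ⟨x, hxG⟩
  -- inequality 1 : spanNum' ≤ spanNum + 1
  have hup : ∀ (n : ℕ) (ε : ℝ), 0 < ε →
      spanNum T' n ε univ ≤ spanNum T n ε univ + 1 := by
    intro n ε hε
    obtain ⟨G, hGf, hGs, hcard⟩ := attainX n ε hε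
    set G' : Set (OnePoint X) := (fun x : X => (x : OnePoint X)) '' G ∪ {OnePoint.infty}
      with hG'
    have hfin : G'.Finite := (hGf.image _).union (finite_singleton _)
    have hspan : IsDynSpanning T' n ε univ G' := by
      intro y _
      induction y using OnePoint.rec with
      | infty =>
        exact ⟨OnePoint.infty, mem_union_right _ (mem_singleton _),
          by rw [hinf n]; exact hε⟩
      | coe x =>
        obtain ⟨g, hgG, hgd⟩ := hGs x (mem_univ x)
        exact ⟨(g : OnePoint X), mem_union_left _ (mem_image_of_mem _ hgG),
          by rw [hdyn]; exact hgd⟩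
    have h1 : spanNum T' n ε univ ≤ G'.ncard := Nat.sInf_le ⟨G', hfin, hspan, rfl⟩
    refine h1.trans ?_
    calc G'.ncard ≤ ((fun x : X => (x : OnePoint X)) '' G).ncard +
          ({OnePoint.infty} : Set (OnePoint X)).ncard := Set.ncard_union_le _ _
      _ ≤ G.ncard + 1 := by
          rw [Set.ncard_singleton]
          exact Nat.add_le_add_right (Set.ncard_image_le hGf) 1
      _ = spanNum T n ε univ + 1 := by rw [hcard]
  -- inequality 2 : spanNum (2ε) ≤ spanNum'
  have hdn : ∀ (n : ℕ) (ε : ℝ), 0 < ε →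
      spanNum T n (2 * ε) univ ≤ spanNum T' n ε univ := by
    intro n ε hε
    obtain ⟨G', h1, h2, h3⟩ := attain' n ε hε
    obtain ⟨G, hGf, hGs, hle⟩ := hdown n ε hε G' h1 h2
    exact le_trans (Nat.sInf_le ⟨G, hGf, hGs, rfl⟩) (h3 ▸ hle)
  have h0b : (0 : EReal) ≠ ⊥ := by rw [← EReal.coe_zero]; exact EReal.coe_ne_bot _
  have h0t : (0 : EReal) ≠ ⊤ := by rw [← EReal.coe_zero]; exact EReal.coe_ne_top _
  have hzero : Filter.limsup (fun n : ℕ => ((Real.log 2 / n : ℝ) : EReal)) Filter.atTop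
      = 0 := by
    have h := tendsto_const_div_atTop_nhds_zero_nat (Real.log 2)
    have h2 : Tendsto (fun n : ℕ => ((Real.log 2 / n : ℝ) : EReal)) atTop
        (𝓝 ((0 : ℝ) : EReal)) := (continuous_coe_real_ereal.tendsto _).comp h
    rw [EReal.coe_zero] at h2
    exact h2.limsup_eq
  have hrate1 : ∀ ε : ℝ, 0 < ε → spanRate T' ε univ ≤ spanRate T ε univ := by
    intro ε hε
    have key : ∀ n : ℕ, (fun n : ℕ => ((Real.log (spanNum T' n ε univ) / n : ℝ) : EReal)) n ≤
        ((fun n : ℕ => ((Real.log 2 / n : ℝ) : EReal)) +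
         (fun n : ℕ => ((Real.log (spanNum T n ε univ) / n : ℝ) : EReal))) n := by
      intro n
      show ((Real.log (spanNum T' n ε univ) / n : ℝ) : EReal) ≤
        ((Real.log 2 / n : ℝ) : EReal) + ((Real.log (spanNum T n ε univ) / n : ℝ) : EReal)
      rw [← EReal.coe_add]
      apply EReal.coe_le_coe_iff.2
      rw [← add_div]
      have h1 : (1 : ℝ) ≤ (spanNum T n ε univ : ℝ) := by exact_mod_cast posX n ε hε
      have h1' : (1 : ℝ) ≤ (spanNum T' n ε univ : ℝ) := by exact_mod_cast pos' n ε hε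
      have h2 : (spanNum T' n ε univ : ℝ) ≤ 2 * (spanNum T n ε univ : ℝ) := by
        have h3' : (spanNum T' n ε univ : ℝ) ≤ (spanNum T n ε univ : ℝ) + 1 := by
          exact_mod_cast hup n ε hε
        linarith
      have hlog : Real.log (spanNum T' n ε univ) ≤
          Real.log 2 + Real.log (spanNum T n ε univ) := by
        rw [← Real.log_mul two_ne_zero (by linarith : (spanNum T n ε univ : ℝ) ≠ 0)]
        exact Real.log_le_log (by linarith) h2
      rcases Nat.eq_zero_or_pos n with h | h
      · subst h; simp
      · exact (div_le_div_iff_of_pos_right (by exact_mod_cast h : (0:ℝ) < (n:ℝ))).2 hlog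
    calc spanRate T' ε univ
        ≤ Filter.limsup ((fun n : ℕ => ((Real.log 2 / n : ℝ) : EReal)) +
            (fun n : ℕ => ((Real.log (spanNum T n ε univ) / n : ℝ) : EReal))) atTop :=
          Filter.limsup_le_limsup (Eventually.of_forall key)
      _ ≤ Filter.limsup (fun n : ℕ => ((Real.log 2 / n : ℝ) : EReal)) atTop +
            Filter.limsup (fun n : ℕ =>
              ((Real.log (spanNum T n ε univ) / n : ℝ) : EReal)) atTop :=
          EReal.limsup_add_le (Or.inl (by rw [hzero]; exact h0b))
            (Or.inl (by rw [hzero]; exact h0t))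
      _ = spanRate T ε univ := by rw [hzero, zero_add]; rfl
  have hrate2 : ∀ ε : ℝ, 0 < ε → spanRate T (2 * ε) univ ≤ spanRate T' ε univ := by
    intro ε hε
    refine Filter.limsup_le_limsup (Eventually.of_forall fun n => ?_)
    apply EReal.coe_le_coe_iff.2
    have h1 : (1 : ℝ) ≤ (spanNum T n (2 * ε) univ : ℝ) := by
      exact_mod_cast posX n (2 * ε) (by linarith)
    have h2 : (spanNum T n (2 * ε) univ : ℝ) ≤ (spanNum T' n ε univ : ℝ) := by
      exact_mod_cast hdn n ε hε
    have hlog := Real.log_le_log (by linarith) h2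
    rcases Nat.eq_zero_or_pos n with h | h
    · subst h; simp
    · exact (div_le_div_iff_of_pos_right (by exact_mod_cast h : (0:ℝ) < (n:ℝ))).2 hlog
  show spanEntropyOn T univ = spanEntropyOn T' univ
  unfold spanEntropyOn
  apply le_antisymm
  · refine iSup₂_le fun ε hε => ?_
    have h2 : spanRate T ε univ ≤ spanRate T' (ε / 2) univ := by
      have h := hrate2 (ε / 2) (half_pos hε)
      rwa [show 2 * (ε / 2) = ε by ring] at h
    exact h2.trans (le_iSup₂ (f := fun (ε : ℝ) (_ : 0 < ε) => spanRate T' ε univ)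
      (ε / 2) (half_pos hε))
  · exact iSup₂_le fun ε hε => (hrate1 ε hε).trans
      (le_iSup₂ (f := fun (ε : ℝ) (_ : 0 < ε) => spanRate T ε univ) ε hε)


/-- for a proper map `T` on a locally compact separable metric space whose
metric is the restriction of a compatible metric `d̃` on the one-point compactification,
the spanning-set entropies agree: `h^d(T) = h^{d̃}(T̃)`. -/
theorem spanEntropy_eq_spanEntropy_onePoint {X : Type*} [MetricSpace X]
    [LocallyCompactSpace X] [TopologicalSpace.SeparableSpace X]
    (T : X → X) (hT : IsProper T)
    (m : MetricSpace (OnePoint X))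
    (htop : m.toUniformSpace.toTopologicalSpace = (inferInstance : TopologicalSpace (OnePoint X)))
    (hrestr : ∀ x y : X, @dist _ m.toDist (x : OnePoint X) (y : OnePoint X) = dist x y) :
    spanEntropy T = @spanEntropy (OnePoint X) m.toPseudoMetricSpace (onePointExt T) := by
  classical
  rcases isEmpty_or_nonempty X with hX | hX
  · letI := m
    set T' := onePointExt T with hT'
    have hLHS : spanEntropy T = 0 := by
      have hnum : ∀ (n : ℕ) (ε : ℝ), spanNum T n ε univ = 0 := by
        intro n ε
        refine Nat.sInf_eq_zero.2 (Or.inl ?_)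
        exact ⟨∅, finite_empty, fun y _ => (IsEmpty.false y).elim, Set.ncard_empty _⟩
      have hr : ∀ ε : ℝ, spanRate T ε univ = 0 := by
        intro ε
        unfold spanRate
        have he : (fun n : ℕ => ((Real.log (spanNum T n ε univ) / n : ℝ) : EReal))
            = fun _ => (0 : EReal) := by
          funext n
          rw [hnum n ε]
          norm_num
        rw [he, limsup_const]
      unfold spanEntropy spanEntropyOn
      apply le_antisymm
      · exact iSup₂_le fun ε hε => le_of_eq (hr ε)
      · exact (hr 1) ▸ le_iSup₂ (f := fun (ε : ℝ) (_ : 0 < ε) => spanRate T ε univ) 1 one_pos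
    have hRHS : spanEntropy T' = 0 := by
      have hnum : ∀ (n : ℕ) (ε : ℝ), 0 < ε → spanNum T' n ε univ = 1 := by
        intro n ε hε
        have h1 : (1 : ℕ) ∈ {k | ∃ G : Set (OnePoint X), G.Finite ∧
            IsDynSpanning T' n ε univ G ∧ G.ncard = k} := by
          refine ⟨{OnePoint.infty}, finite_singleton _, ?_, Set.ncard_singleton _⟩
          intro y _
          induction y using OnePoint.rec with
          | infty =>
            exact ⟨OnePoint.infty, mem_singleton _,
              by rw [dynDist_self_infty T n]; exact hε⟩
          | coe x => exact (IsEmpty.false x).elim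
        have h0 : (0 : ℕ) ∉ {k | ∃ G : Set (OnePoint X), G.Finite ∧
            IsDynSpanning T' n ε univ G ∧ G.ncard = k} := by
          rintro ⟨G, hGf, hGs, hG0⟩
          rw [Set.ncard_eq_zero hGf] at hG0
          obtain ⟨g, hg, -⟩ := hGs OnePoint.infty (mem_univ _)
          rw [hG0] at hg
          exact hg
        refine le_antisymm (Nat.sInf_le h1) ?_
        rcases Nat.eq_zero_or_pos (spanNum T' n ε univ) with h | h
        · exfalso
          rcases Nat.sInf_eq_zero.1 h with h' | h'
          · exact h0 h'
          · rw [h'] at h1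
            exact h1
        · exact h
      have hr : ∀ ε : ℝ, 0 < ε → spanRate T' ε univ = 0 := by
        intro ε hε
        unfold spanRate
        have he : (fun n : ℕ => ((Real.log (spanNum T' n ε univ) / n : ℝ) : EReal))
            = fun _ => (0 : EReal) := by
          funext n
          rw [hnum n ε hε]
          norm_num
        rw [he, limsup_const]
      unfold spanEntropy spanEntropyOn
      apply le_antisymm
      · exact iSup₂_le fun ε hε => le_of_eq (hr ε hε)
      · exact (hr 1 one_pos) ▸
          le_iSup₂ (f := fun (ε : ℝ) (_ : 0 < ε) => spanRate T' ε univ) 1 one_pos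
    rw [hLHS]
    exact hRHS.symm
  · have hcs : @CompactSpace (OnePoint X) m.toUniformSpace.toTopologicalSpace := by
      rw [htop]; infer_instance
    exact spanEntropy_aux T m hcs hrestr
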